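/- arXiv:math/0502038 — 5 statements merged into one kernel-verified Lean document; each statement's English description precedes it below -/
import Mathlib

section
/- Let R > 2 and p(z) = z^2 - R, viewed as a map of ℂ. If z ∈ ℂ has bounded orbit under p (i.e. {pⁿ(z) : n ≥ 0} is bounded), then z is real. In particular the filled Julia set of p is contained in the real line. -/
/-- Escape lemma: if `t (k+1) ≥ t k ^ 2 - R` and `t 0 > β` where `β² = β + R`, `β > 2`,
then `t` is unbounded. -/
lemma escape_aux (R β M : ℝ) (hβ2 : 2 < β) (hβfix : β ^ 2 = β + R)
    (t : ℕ → ℝ) (ht : ∀ k, t k ^ 2 - R ≤ t (k + 1)) (htM : ∀ k, t k ≤ M)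
    (h0 : β < t 0) : False := by
  obtain ⟨d, hd, hd0⟩ : ∃ d : ℝ, d = t 0 - β ∧ 0 < d := ⟨t 0 - β, rfl, by linarith⟩
  have grow : ∀ k, β + 2 ^ k * d ≤ t k := by
    intro k
    induction k with
    | zero => simp only [pow_zero, one_mul, hd]; linarith
    | succ k ih =>
      have he : (0:ℝ) < 2 ^ k * d := by positivity
      have h2 : (β + 2 ^ k * d) ^ 2 ≤ t k ^ 2 := by nlinarith
      have h3 : β + 2 ^ (k+1) * d ≤ t k ^ 2 - R := by
        rw [pow_succ]
        nlinarith
      linarith [ht k]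
  obtain ⟨k, hk⟩ := pow_unbounded_of_one_lt ((M - β) / d) one_lt_two
  rw [div_lt_iff₀ hd0] at hk
  linarith [grow k, htM k]

/-- Core real-arithmetic lemma: for the orbit recurrences of `z ↦ z² - R` trapped in the
disk of radius `β` (with `β² = β + R`, `2 < β < R`), the imaginary part must vanish.
Here `a n, b n` are the real and imaginary parts of the orbit. -/
lemma julia_aux (R β : ℝ) (hβ2 : 2 < β) (hβfix : β ^ 2 = β + R) (hβR : β < R)
    (a b : ℕ → ℝ)
    (hre : ∀ n, a (n+1) = a n ^ 2 - b n ^ 2 - R)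
    (hb : ∀ n, b (n+1) = 2 * a n * b n)
    (hnorm : ∀ n, a n ^ 2 + b n ^ 2 ≤ β ^ 2)
    (hlb : ∀ n, -β ≤ a n)
    (hb0 : b 0 ≠ 0) : False := by
  -- the Lyapunov quantity Φ n = b n ^ 2 / (β² - a n ²) at least doubles at each step
  have key : ∀ n, 0 < b n ^ 2 ∧
      2 ^ n * b 0 ^ 2 * (β ^ 2 - a n ^ 2) ≤ b n ^ 2 * (β ^ 2 - a 0 ^ 2) := by
    intro n
    induction n with
    | zero => exact ⟨by positivity, by simp⟩
    | succ n ih =>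
      obtain ⟨hspos, hΦ⟩ := ih
      have hA : b n ^ 2 ≤ β ^ 2 - a n ^ 2 := by linarith [hnorm n]
      have hA0 : 0 < β ^ 2 - a n ^ 2 := lt_of_lt_of_le hspos hA
      have hB : 0 ≤ a n ^ 2 - b n ^ 2 - (R - β) := by
        have h1 := hlb (n+1)
        rw [hre n] at h1
        linarith
      have hqpos : 0 < R - β := by linarith
      have hupos : 0 < a n ^ 2 := by nlinarith
      have hs1 : b (n+1) ^ 2 = 4 * a n ^ 2 * b n ^ 2 := by rw [hb n]; ring
      have hspos' : 0 < b (n+1) ^ 2 := by rw [hs1]; positivity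
      -- key factorization using β² = β + R
      have hnext : β ^ 2 - a (n+1) ^ 2 =
          (β ^ 2 - a n ^ 2 + b n ^ 2) * (a n ^ 2 - b n ^ 2 - (R - β)) := by
        rw [hre n]
        linear_combination (-(a n ^ 2 - b n ^ 2 - R) - β) * hβfix
      have hratio : 2 * b n ^ 2 * (β ^ 2 - a (n+1) ^ 2) ≤ b (n+1) ^ 2 * (β ^ 2 - a n ^ 2) := by
        rw [hnext, hs1]
        have hm0 : β ^ 2 - a n ^ 2 + b n ^ 2 ≤ 2 * (β ^ 2 - a n ^ 2) := by linarith
        have hm1 : a n ^ 2 - b n ^ 2 - (R - β) ≤ a n ^ 2 := by nlinarith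
        have hm := mul_le_mul hm0 hm1 hB (by linarith : (0:ℝ) ≤ 2 * (β ^ 2 - a n ^ 2))
        nlinarith [mul_le_mul_of_nonneg_left hm (le_of_lt hspos)]
      refine ⟨hspos', ?_⟩
      have h3 := mul_le_mul_of_nonneg_left hratio
        (show (0:ℝ) ≤ 2 ^ n * b 0 ^ 2 by positivity)
      have h4 := mul_le_mul_of_nonneg_left hΦ (le_of_lt hspos')
      have hfin : (2 ^ (n+1) * b 0 ^ 2 * (β ^ 2 - a (n+1) ^ 2)) * b n ^ 2 ≤
          (b (n+1) ^ 2 * (β ^ 2 - a 0 ^ 2)) * b n ^ 2 := by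
        rw [pow_succ]
        nlinarith [h3, h4]
      exact le_of_mul_le_mul_right hfin hspos
  -- conclude: Φ n ≤ 1 but Φ n ≥ 2 ^ n Φ 0 → ∞
  have hs0 : 0 < b 0 ^ 2 := (key 0).1
  have hu0 : 0 < β ^ 2 - a 0 ^ 2 := lt_of_lt_of_le hs0 (by linarith [hnorm 0])
  obtain ⟨n, hn⟩ := pow_unbounded_of_one_lt ((β ^ 2 - a 0 ^ 2) / b 0 ^ 2) one_lt_two
  obtain ⟨hsn, hΦn⟩ := key n
  have hun : 0 < β ^ 2 - a n ^ 2 := lt_of_lt_of_le hsn (by linarith [hnorm n])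
  have h5 : b n ^ 2 * (β ^ 2 - a 0 ^ 2) ≤ (β ^ 2 - a n ^ 2) * (β ^ 2 - a 0 ^ 2) :=
    mul_le_mul_of_nonneg_right (by linarith [hnorm n]) (le_of_lt hu0)
  have h7 := le_trans hΦn h5
  have h6 : 2 ^ n * b 0 ^ 2 ≤ β ^ 2 - a 0 ^ 2 := by
    have h8 : (2 ^ n * b 0 ^ 2) * (β ^ 2 - a n ^ 2) ≤ (β ^ 2 - a 0 ^ 2) * (β ^ 2 - a n ^ 2) := by
      nlinarith [h7]
    exact le_of_mul_le_mul_right h8 hun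
  rw [div_lt_iff₀ hs0] at hn
  linarith

/-- For `R > 2` and `p(z) = z² - R` as a map of `ℂ`: if `z ∈ ℂ` has
bounded forward orbit under `p`, then `z` is real. In particular the filled Julia
set of `p` is contained in the real line. -/
theorem stmt6 (R : ℝ) (hR : 2 < R)
    (p : ℂ → ℂ) (hp : ∀ z, p z = z ^ 2 - (R : ℂ))
    (z : ℂ) (hz : Bornology.IsBounded (Set.range fun n : ℕ => p^[n] z)) :
    z.im = 0 := by
  by_contra him
  have h4R : (0:ℝ) ≤ 1 + 4 * R := by linarith
  have hsq : Real.sqrt (1 + 4 * R) ^ 2 = 1 + 4 * R := Real.sq_sqrt h4R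
  have hs3 : 3 < Real.sqrt (1 + 4 * R) := by nlinarith [Real.sqrt_nonneg (1 + 4 * R)]
  obtain ⟨β, hβfix, hβ2⟩ : ∃ β : ℝ, β ^ 2 = β + R ∧ 2 < β :=
    ⟨(1 + Real.sqrt (1 + 4 * R)) / 2, by linear_combination (1/4 : ℝ) * hsq, by linarith⟩
  have hβR : β < R := by nlinarith
  have hws : ∀ n : ℕ, p^[n+1] z = (p^[n] z) ^ 2 - (R:ℂ) := by
    intro n
    rw [Function.iterate_succ_apply', hp]
  obtain ⟨M, hM⟩ := isBounded_iff_forall_norm_le.mp hz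
  have hM' : ∀ n : ℕ, ‖p^[n] z‖ ≤ M := fun n => hM _ ⟨n, rfl⟩
  -- all iterates lie in the closed disk of radius β
  have hβall : ∀ n : ℕ, ‖p^[n] z‖ ≤ β := by
    by_contra h
    push_neg at h
    obtain ⟨N, hN⟩ := h
    refine escape_aux R β M hβ2 hβfix (fun k => ‖p^[N+k] z‖) ?_ (fun k => hM' _) hN
    intro k
    show ‖p^[N+k] z‖ ^ 2 - R ≤ ‖p^[N+(k+1)] z‖
    have hNk : N + (k+1) = (N+k) + 1 := rfl
    rw [hNk, hws (N+k)]
    calc ‖p^[N+k] z‖ ^ 2 - R = ‖(p^[N+k] z) ^ 2‖ - ‖(R:ℂ)‖ := by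
          rw [norm_pow, Complex.norm_real, Real.norm_eq_abs,
            abs_of_pos (by linarith : (0:ℝ) < R)]
      _ ≤ ‖(p^[N+k] z) ^ 2 - (R:ℂ)‖ := norm_sub_norm_le _ _
  refine julia_aux R β hβ2 hβfix hβR (fun n => (p^[n] z).re) (fun n => (p^[n] z).im)
    ?_ ?_ ?_ ?_ him
  · intro n
    show (p^[n+1] z).re = (p^[n] z).re ^ 2 - (p^[n] z).im ^ 2 - R
    rw [hws n]
    simp only [Complex.sub_re, Complex.ofReal_re, pow_two, Complex.mul_re]
  · intro n
    show (p^[n+1] z).im = 2 * (p^[n] z).re * (p^[n] z).im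
    rw [hws n]
    simp only [Complex.sub_im, Complex.ofReal_im, pow_two, Complex.mul_im]
    ring
  · intro n
    show (p^[n] z).re ^ 2 + (p^[n] z).im ^ 2 ≤ β ^ 2
    have h2 : (p^[n] z).re ^ 2 + (p^[n] z).im ^ 2 = ‖p^[n] z‖ ^ 2 := by
      rw [Complex.sq_norm, Complex.normSq_apply]; ring
    nlinarith [norm_nonneg (p^[n] z), hβall n]
  · intro n
    show -β ≤ (p^[n] z).re
    have h1 : |(p^[n] z).re| ≤ ‖p^[n] z‖ := by
      exact Complex.abs_re_le_norm _
    have h2 := (abs_le.mp (le_trans h1 (hβall n))).1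
    linarith
end

section
/- Let p : ℂ → ℂ be a polynomial, let B₁, …, B_N be nonempty compact subsets of ℂ with union 𝓑' = ⋃ₖ Bₖ, and suppose p is box-expansive on this collection: there exist L > 1 and positive constants φ₁, …, φ_N such that whenever p(Bₖ) ∩ Bⱼ ≠ ∅ one has φⱼ·|p'(z)| ≥ L·φₖ for all z ∈ Bₖ. Let Λ₁ = 𝓑' ∩ p⁻¹(𝓑'). Then there exist η > 1 and a continuous function ρ : ℂ → ℝ with ρ(z) > 0 for all z, such that ρ(p(z))·|p'(z)| ≥ η·ρ(z) for every z ∈ Λ₁; i.e. p uniformly expands the conformal metric ρ(z)|dz| by the factor η on Λ₁. -/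
/-- Let `p` be a polynomial map of `ℂ`, and `B₁, …, B_N` nonempty compact
subsets of `ℂ` with union `𝓑'`. Suppose `p` is box-expansive: there are `L > 1` and
positive constants `φₖ` such that whenever `p(Bₖ) ∩ Bⱼ ≠ ∅`, one has
`φⱼ·|p'(z)| ≥ L·φₖ` for all `z ∈ Bₖ`. Let `Λ₁ = 𝓑' ∩ p⁻¹(𝓑')`. Then there exist
`η > 1` and a continuous positive function `ρ : ℂ → ℝ` such that
`ρ(p(z))·|p'(z)| ≥ η·ρ(z)` for every `z ∈ Λ₁`. -/
theorem stmt14 (P : Polynomial ℂ)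
    (N : ℕ) (B : Fin N → Set ℂ)
    (hBne : ∀ k, (B k).Nonempty) (hBcpt : ∀ k, IsCompact (B k))
    (L : ℝ) (hL : 1 < L)
    (φ : Fin N → ℝ) (hφ : ∀ k, 0 < φ k)
    (hexp : ∀ k j : Fin N, ((fun z => P.eval z) '' B k ∩ B j).Nonempty →
      ∀ z ∈ B k, φ j * ‖P.derivative.eval z‖ ≥ L * φ k)
    (𝓑 Λ₁ : Set ℂ)
    (h𝓑 : 𝓑 = ⋃ k, B k)
    (hΛ : Λ₁ = 𝓑 ∩ (fun z => P.eval z) ⁻¹' 𝓑) :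
    ∃ η : ℝ, 1 < η ∧ ∃ ρ : ℂ → ℝ, Continuous ρ ∧ (∀ z, 0 < ρ z) ∧
      ∀ z ∈ Λ₁, ρ (P.eval z) * ‖P.derivative.eval z‖ ≥ η * ρ z := by
  classical
  have hL0 : (0:ℝ) ≤ L := le_of_lt (lt_trans one_pos hL)
  rcases Nat.eq_zero_or_pos N with hN | hN
  · subst hN
    refine ⟨L, hL, fun _ => 1, continuous_const, fun _ => one_pos, fun z hz => ?_⟩
    rw [hΛ, h𝓑] at hz
    simp [Set.iUnion_of_empty] at hz
  haveI hne : Nonempty (Fin N) := Fin.pos_iff_nonempty.mp hN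
  set φM : ℝ := Finset.univ.sup' Finset.univ_nonempty φ with hφMdef
  set φm : ℝ := Finset.univ.inf' Finset.univ_nonempty φ with hφmdef
  have hφm : 0 < φm := (Finset.lt_inf'_iff _).mpr fun i _ => hφ i
  have hφm_le : ∀ k, φm ≤ φ k := fun k => Finset.inf'_le _ (Finset.mem_univ k)
  have hle_φM : ∀ k, φ k ≤ φM := fun k => Finset.le_sup' _ (Finset.mem_univ k)
  have hφM : 0 < φM := lt_of_lt_of_le hφm (le_trans (hφm_le (Classical.arbitrary _)) (hle_φM _))
  -- minimal distance δ₀ between p(B k) and B j over disjoint pairs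
  have H : ∀ q : Fin N × Fin N, ∃ δ : ℝ, 0 < δ ∧
      (¬((fun z => P.eval z) '' B q.1 ∩ B q.2).Nonempty →
        ∀ w ∈ (fun z => P.eval z) '' B q.1, δ ≤ Metric.infDist w (B q.2)) := by
    rintro ⟨k, j⟩
    by_cases hd : ((fun z => P.eval z) '' B k ∩ B j).Nonempty
    · exact ⟨1, one_pos, fun h => absurd hd h⟩
    · have hK : IsCompact ((fun z => P.eval z) '' B k) := (hBcpt k).image (P.continuous)
      have hKne : ((fun z => P.eval z) '' B k).Nonempty := (hBne k).image _
      obtain ⟨w₀, hw₀K, hw₀min⟩ := hK.exists_isMinOn hKne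
        ((Metric.continuous_infDist_pt (B j)).continuousOn)
      refine ⟨Metric.infDist w₀ (B j), ?_, fun _ w hw => (isMinOn_iff.mp hw₀min) w hw⟩
      have hw₀ : w₀ ∉ B j := fun hmem => hd ⟨w₀, hw₀K, hmem⟩
      exact ((hBcpt j).isClosed.notMem_iff_infDist_pos (hBne j)).mp hw₀
  choose δf hδpos hδ using H
  set δ₀ : ℝ := Finset.univ.inf' Finset.univ_nonempty δf with hδ₀def
  have hδ₀pos : 0 < δ₀ := (Finset.lt_inf'_iff _).mpr fun q _ => hδpos q
  have hδ₀le : ∀ q, δ₀ ≤ δf q := fun q => Finset.inf'_le _ (Finset.mem_univ q)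
  set C : ℝ := φM ^ 2 / (φm ^ 2 * δ₀) with hCdef
  have hC : 0 ≤ C := by positivity
  have hCδ₀ : C * δ₀ = φM ^ 2 / φm ^ 2 := by
    rw [hCdef]; field_simp
  clear_value φM φm δ₀ C
  set ρ : ℂ → ℝ :=
    fun w => Finset.univ.inf' Finset.univ_nonempty
      (fun k => φ k * (1 + C * Metric.infDist w (B k))) with hρdef
  have hρ_le : ∀ z : ℂ, ∀ k, z ∈ B k → ρ z ≤ φ k := by
    intro z k hzk
    have h1 : ρ z ≤ φ k * (1 + C * Metric.infDist z (B k)) :=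
      Finset.inf'_le _ (Finset.mem_univ k)
    rw [Metric.infDist_zero_of_mem hzk] at h1
    simpa using h1
  have hρ_pos : ∀ w, 0 < ρ w := by
    intro w
    refine (Finset.lt_inf'_iff _).mpr fun i _ => ?_
    exact mul_pos (hφ i)
      (add_pos_of_pos_of_nonneg one_pos (mul_nonneg hC Metric.infDist_nonneg))
  have hρ_cont : Continuous ρ := by
    refine Continuous.finset_inf'_apply Finset.univ_nonempty fun i _ => ?_
    exact continuous_const.mul
      (continuous_const.add (continuous_const.mul (Metric.continuous_infDist_pt (B i))))
  refine ⟨L, hL, ρ, hρ_cont, hρ_pos, fun z hz => ?_⟩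
  rw [hΛ] at hz
  obtain ⟨hz1, hz2⟩ := hz
  rw [h𝓑] at hz1 hz2
  obtain ⟨k, hzk⟩ := Set.mem_iUnion.mp hz1
  obtain ⟨j', hj'⟩ := Set.mem_iUnion.mp hz2
  set w : ℂ := P.eval z with hwdef
  set D : ℝ := ‖P.derivative.eval z‖ with hDdef
  have hD0 : 0 ≤ D := norm_nonneg _
  have hDk : L * φ k ≤ φ j' * D := hexp k j' ⟨w, ⟨z, hzk, rfl⟩, hj'⟩ z hzk
  obtain ⟨j, _, hjeq⟩ := Finset.exists_mem_eq_inf' (Finset.univ_nonempty)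
    (fun k => φ k * (1 + C * Metric.infDist w (B k)))
  have hρw : ρ w = φ j * (1 + C * Metric.infDist w (B j)) := hjeq
  set d : ℝ := Metric.infDist w (B j) with hddef
  have hd0 : 0 ≤ d := Metric.infDist_nonneg
  have hρz : ρ z ≤ φ k := hρ_le z k hzk
  have hd₀' : ¬((fun z => P.eval z) '' B k ∩ B j).Nonempty → δ₀ ≤ d := fun hint =>
    le_trans (hδ₀le (k, j)) (hδ (k, j) hint w ⟨z, hzk, hwdef.symm⟩)
  clear_value w D d
  rw [ge_iff_le]
  by_cases hint : ((fun z => P.eval z) '' B k ∩ B j).Nonempty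
  · have h1 : L * φ k ≤ φ j * D := by rw [hDdef]; exact hexp k j hint z hzk
    calc L * ρ z ≤ L * φ k := mul_le_mul_of_nonneg_left hρz hL0
      _ ≤ φ j * D := h1
      _ ≤ φ j * (1 + C * d) * D := by
          refine mul_le_mul_of_nonneg_right ?_ hD0
          exact le_mul_of_one_le_right (hφ j).le (by linarith [mul_nonneg hC hd0])
      _ = ρ w * D := by rw [hρw]
  · have hd₀ : δ₀ ≤ d := hd₀' hint
    -- lower bound on ρ w
    have s1 : C * δ₀ ≤ C * d := mul_le_mul_of_nonneg_left hd₀ hC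
    have t1 : φm * (C * δ₀) ≤ φm * (C * d) := mul_le_mul_of_nonneg_left s1 hφm.le
    have t2 : φm * (C * d) ≤ φ j * (C * d) :=
      mul_le_mul_of_nonneg_right (hφm_le j) (mul_nonneg hC hd0)
    have t3 : φ j * (C * d) ≤ φ j * (1 + C * d) := by nlinarith [hφ j]
    have h1 : φm * (C * δ₀) ≤ ρ w := by rw [hρw]; linarith
    have hCδ₀' : φm * (C * δ₀) = φM ^ 2 / φm := by
      rw [hCδ₀]; field_simp
    have h1' : φM ^ 2 ≤ φm * ρ w := by
      rw [hCδ₀'] at h1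
      rw [div_le_iff₀ hφm] at h1
      nlinarith [h1]
    -- lower bound on D
    have u1 : L * φm ≤ L * φ k := mul_le_mul_of_nonneg_left (hφm_le k) hL0
    have u3 : φ j' * D ≤ φM * D := mul_le_mul_of_nonneg_right (hle_φM j') hD0
    have h2 : L * φm ≤ φM * D := le_trans u1 (le_trans hDk u3)
    have key : (φM ^ 2) * (L * φm) ≤ (φm * ρ w) * (φM * D) :=
      mul_le_mul h1' h2 (mul_nonneg hL0 hφm.le) (mul_nonneg hφm.le (hρ_pos w).le)
    have hfin : L * φM ≤ ρ w * D := by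
      nlinarith [key, mul_pos hφm hφM]
    calc L * ρ z ≤ L * φ k := mul_le_mul_of_nonneg_left hρz hL0
      _ ≤ L * φM := mul_le_mul_of_nonneg_left (hle_φM k) hL0
      _ ≤ ρ w * D := hfin
end

section
/- Let f(z,w) = (p(z), q(z,w)) be a polynomial skew product of ℂ², let B₁, …, B_N be nonempty compact subsets of ℂ² with union 𝓑' = ⋃ₖ Bₖ, and suppose f is box vertically expansive: there exist L > 1 and positive constants φ₁, …, φ_N such that whenever f(Bₖ) ∩ Bⱼ ≠ ∅ one has φⱼ·|∂q/∂w(z,w)| ≥ L·φₖ for all (z,w) ∈ Bₖ. Set c = (minₖ φₖ)/(maxₖ φₖ) > 0. Then for every n ≥ 1 and every point (z,w) whose first n iterates satisfy fⁱ(z,w) ∈ 𝓑' for i = 0, 1, …, n, one has |(Qⁿ_z)'(w)| ≥ c·Lⁿ, where (Qⁿ_z)'(w) = ∏_{i=0}^{n-1} (∂q/∂w)(fⁱ(z,w)) is the vertical derivative of fⁿ. In particular f is vertically expanding on the set of points whose full forward orbit stays in 𝓑'. -/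
/-- Let `f(z,w) = (p(z), q(z,w))` be a polynomial skew product of `ℂ²`
(here `q` is encoded by `Q : Polynomial (Polynomial ℂ)`, a polynomial in `w` whose
coefficients are polynomials in `z`, so `q z w = (Q.map (evalRingHom z)).eval w` and the
vertical derivative is `∂q/∂w(z,w) = (derivative (Q.map (evalRingHom z))).eval w`).
Let `B₁, …, B_N` be nonempty compact subsets of `ℂ²` with union `𝓑'`, and suppose `f`
is box vertically expansive: there are `L > 1` and positive `φₖ` with
`φⱼ·|∂q/∂w(z,w)| ≥ L·φₖ` for all `(z,w) ∈ Bₖ` whenever `f(Bₖ) ∩ Bⱼ ≠ ∅`.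
Set `c = (minₖ φₖ)/(maxₖ φₖ) > 0`. Then for every `n ≥ 1` and every point `x = (z,w)`
with `fⁱ(x) ∈ 𝓑'` for `i = 0, …, n`, one has
`|(Qⁿ_z)'(w)| = |∏_{i<n} ∂q/∂w(fⁱ(x))| ≥ c·Lⁿ`. -/
theorem stmt15 (P : Polynomial ℂ) (Q : Polynomial (Polynomial ℂ))
    (q : ℂ → ℂ → ℂ)
    (hq : ∀ z w, q z w = (Q.map (Polynomial.evalRingHom z)).eval w)
    (f : ℂ × ℂ → ℂ × ℂ)
    (hf : ∀ x : ℂ × ℂ, f x = (P.eval x.1, q x.1 x.2))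
    (dq : ℂ × ℂ → ℂ)
    (hdq : ∀ x : ℂ × ℂ,
      dq x = (Polynomial.derivative (Q.map (Polynomial.evalRingHom x.1))).eval x.2)
    (N : ℕ) (hN : 0 < N)
    (B : Fin N → Set (ℂ × ℂ))
    (hBne : ∀ k, (B k).Nonempty) (hBcpt : ∀ k, IsCompact (B k))
    (L : ℝ) (hL : 1 < L)
    (φ : Fin N → ℝ) (hφ : ∀ k, 0 < φ k)
    (hexp : ∀ k j : Fin N, (f '' B k ∩ B j).Nonempty →
      ∀ x ∈ B k, φ j * ‖dq x‖ ≥ L * φ k)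
    (𝓑 : Set (ℂ × ℂ)) (h𝓑 : 𝓑 = ⋃ k, B k)
    (c : ℝ)
    (hc : c = (Finset.univ.inf' ⟨⟨0, hN⟩, Finset.mem_univ _⟩ φ) /
              (Finset.univ.sup' ⟨⟨0, hN⟩, Finset.mem_univ _⟩ φ)) :
    0 < c ∧
    ∀ n : ℕ, 1 ≤ n → ∀ x : ℂ × ℂ, (∀ i, i ≤ n → f^[i] x ∈ 𝓑) →
      ‖∏ i ∈ Finset.range n, dq (f^[i] x)‖ ≥ c * L ^ n := by

  have hinf : 0 < (Finset.univ.inf' ⟨⟨0, hN⟩, Finset.mem_univ _⟩ φ) :=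
    (Finset.lt_inf'_iff _).2 fun k _ => hφ k
  have hsup : 0 < (Finset.univ.sup' ⟨⟨0, hN⟩, Finset.mem_univ _⟩ φ) :=
    lt_of_lt_of_le hinf (le_trans (Finset.inf'_le φ (Finset.mem_univ (⟨0, hN⟩ : Fin N))) (Finset.le_sup' φ (Finset.mem_univ (⟨0, hN⟩ : Fin N))))
  have hcpos : 0 < c := hc ▸ div_pos hinf hsup
  refine ⟨hcpos, ?_⟩
  intro n hn x horb
  have hL0 : (0:ℝ) < L := lt_trans one_pos hL
  have hk : ∀ i, i ≤ n → ∃ j, f^[i] x ∈ B j := fun i hi => by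
    have := horb i hi; rw [h𝓑] at this; simpa using this
  classical
  set k : ℕ → Fin N := fun i => if h : i ≤ n then (hk i h).choose else ⟨0, hN⟩ with hkdef
  have hkmem : ∀ i (hi : i ≤ n), f^[i] x ∈ B (k i) := by
    intro i hi
    simp only [hkdef, dif_pos hi]
    exact (hk i hi).choose_spec
  have key : ∀ m, m ≤ n →
      L ^ m * φ (k 0) ≤ φ (k m) * ∏ i ∈ Finset.range m, ‖dq (f^[i] x)‖ := by
    intro m
    induction m with
    | zero => intro _; simp
    | succ m ih =>
      intro hm1
      have hm : m ≤ n := Nat.le_of_succ_le hm1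
      have ihm := ih hm
      have hne : (f '' B (k m) ∩ B (k (m+1))).Nonempty := by
        refine ⟨f^[m+1] x, ⟨f^[m] x, hkmem m hm, ?_⟩, hkmem (m+1) hm1⟩
        rw [Function.iterate_succ_apply']
      have hstep := hexp (k m) (k (m+1)) hne (f^[m] x) (hkmem m hm)
      have hprodnn : 0 ≤ ∏ i ∈ Finset.range m, ‖dq (f^[i] x)‖ :=
        Finset.prod_nonneg fun i _ => norm_nonneg _
      calc L ^ (m+1) * φ (k 0) = L * (L ^ m * φ (k 0)) := by ring
        _ ≤ L * (φ (k m) * ∏ i ∈ Finset.range m, ‖dq (f^[i] x)‖) :=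
            mul_le_mul_of_nonneg_left ihm (le_of_lt hL0)
        _ = (L * φ (k m)) * ∏ i ∈ Finset.range m, ‖dq (f^[i] x)‖ := by ring
        _ ≤ (φ (k (m+1)) * ‖dq (f^[m] x)‖) *
              ∏ i ∈ Finset.range m, ‖dq (f^[i] x)‖ :=
            mul_le_mul_of_nonneg_right hstep hprodnn
        _ = φ (k (m+1)) * ∏ i ∈ Finset.range (m+1), ‖dq (f^[i] x)‖ := by
            rw [Finset.prod_range_succ]; ring
  have hkey := key n le_rfl
  have habs : ‖∏ i ∈ Finset.range n, dq (f^[i] x)‖ =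
      ∏ i ∈ Finset.range n, ‖dq (f^[i] x)‖ := norm_prod _ _
  rw [ge_iff_le, habs]
  have hc' : c ≤ φ (k 0) / φ (k n) := by
    rw [hc]
    exact div_le_div₀ (le_of_lt (hφ (k 0)))
      (Finset.inf'_le _ (Finset.mem_univ _)) (hφ (k n))
      (Finset.le_sup' _ (Finset.mem_univ _))
  calc c * L ^ n ≤ (φ (k 0) / φ (k n)) * L ^ n :=
        mul_le_mul_of_nonneg_right hc' (le_of_lt (pow_pos hL0 n))
    _ = (L ^ n * φ (k 0)) / φ (k n) := by ring
    _ ≤ (φ (k n) * ∏ i ∈ Finset.range n, ‖dq (f^[i] x)‖) / φ (k n) :=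
        div_le_div_of_nonneg_right hkey (hφ (k n)).le
    _ = ∏ i ∈ Finset.range n, ‖dq (f^[i] x)‖ := by
        exact mul_div_cancel_left₀ _ (ne_of_gt (hφ (k n)))
end

section
/- Let √80 = 4√5 and consider the skew product f(z,w) = (z² - 90, w² + z(0.046 + 0.04i) - 0.56 + 0.37i). For every real z ∈ [-10, -√80], the fiber map q_z(w) = w² + c(z) with c(z) = z(0.046 + 0.04i) - 0.56 + 0.37i has an attracting cycle of period 2: there exist w₀ ≠ w₁ in ℂ with w₀² + c(z) = w₁, w₁² + c(z) = w₀, and |4·w₀·w₁| < 1. (Hence q_z lies in the same hyperbolic component of the Mandelbrot set as the Basillica map w ↦ w² - 1.) -/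
/-- For the skew product
`f(z,w) = (z² - 90, w² + z(0.046 + 0.04i) - 0.56 + 0.37i)` and every real
`z ∈ [-10, -√80]`, the fiber map `q_z(w) = w² + c(z)` with
`c(z) = z(0.046 + 0.04i) - 0.56 + 0.37i` has an attracting cycle of period 2:
there are `w₀ ≠ w₁` in `ℂ` with `w₀² + c(z) = w₁`, `w₁² + c(z) = w₀`, and
`|4·w₀·w₁| < 1`. (Hence `q_z` lies in the same hyperbolic component of the Mandelbrot
set as the Basillica `w ↦ w² - 1`.) The constants are exact rationals. -/
theorem stmt18 :
    ∀ z ∈ Set.Icc (-10 : ℝ) (-Real.sqrt 80),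
      ∃ w₀ w₁ : ℂ, w₀ ≠ w₁ ∧
        w₀ ^ 2 + ((z : ℂ) * (46 / 1000 + (4 / 100) * Complex.I)
          - 56 / 100 + (37 / 100) * Complex.I) = w₁ ∧
        w₁ ^ 2 + ((z : ℂ) * (46 / 1000 + (4 / 100) * Complex.I)
          - 56 / 100 + (37 / 100) * Complex.I) = w₀ ∧
        ‖4 * w₀ * w₁‖ < 1 := by
  intro z hz
  obtain ⟨hz1, hz2⟩ := hz
  have h80 : (8.9 : ℝ) ≤ Real.sqrt 80 := by
    rw [show (8.9:ℝ) = Real.sqrt (8.9^2) by rw [Real.sqrt_sq (by norm_num)]]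
    exact Real.sqrt_le_sqrt (by norm_num)
  have hz2' : z ≤ -8.9 := le_trans hz2 (by linarith)
  set c : ℂ := (z : ℂ) * (46 / 1000 + (4 / 100) * Complex.I)
      - 56 / 100 + (37 / 100) * Complex.I with hc
  -- key bound: |4(c+1)| < 1
  have habs : ‖4 * (c + 1)‖ < 1 := by
    have hsq : ‖4 * (c + 1)‖ ^ 2 < 1 := by
      rw [Complex.sq_norm, Complex.normSq_apply]
      have hre : (4 * (c + 1)).re = 4 * (46/1000 * z + 44/100) := by
        simp [hc, Complex.add_re, Complex.mul_re]; ring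
      have him : (4 * (c + 1)).im = 4 * (4/100 * z + 37/100) := by
        simp [hc, Complex.add_im, Complex.mul_im]; ring
      rw [hre, him]
      nlinarith [sq_nonneg (z + 10), sq_nonneg (z + 8.9)]
    nlinarith [norm_nonneg (4 * (c + 1))]
  obtain ⟨s, hs⟩ := IsAlgClosed.exists_pow_nat_eq (1 - 4 * (c + 1)) (n := 2) (by norm_num)
  have hsne : s ≠ 0 := by
    intro h
    rw [h] at hs
    have h1 : (4 : ℂ) * (c + 1) = 1 := by linear_combination hs
    rw [h1] at habs
    simp at habs
  refine ⟨(-1 + s) / 2, (-1 - s) / 2, ?_, ?_, ?_, ?_⟩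
  · intro h
    apply hsne
    linear_combination h
  · linear_combination (1/4 : ℂ) * hs
  · linear_combination (1/4 : ℂ) * hs
  · have h4 : 4 * ((-1 + s) / 2) * ((-1 - s) / 2) = 4 * (c + 1) := by
      linear_combination -hs
    rw [h4]; exact habs
end

section
/- Let √80 = 4√5 and consider the skew product f(z,w) = (z² - 90, w² + z(0.046 + 0.04i) - 0.56 + 0.37i). For every real z ∈ [√80, 10], the fiber map q_z(w) = w² + c(z) with c(z) = z(0.046 + 0.04i) - 0.56 + 0.37i has an attracting cycle of period 3: there exist pairwise distinct w₀, w₁, w₂ in ℂ with w₀² + c(z) = w₁, w₁² + c(z) = w₂, w₂² + c(z) = w₀, and |8·w₀·w₁·w₂| < 1. (Hence q_z lies in the same hyperbolic component of the Mandelbrot set as the Rabbit map w ↦ w² - 0.12 + 0.75i.) -/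
set_option maxHeartbeats 2000000

private lemma my_le_sqrt {a b : ℝ} (ha : 0 ≤ a) (h : a ^ 2 ≤ b) : a ≤ Real.sqrt b := by
  nlinarith [Real.sq_sqrt (by nlinarith : (0:ℝ) ≤ b), Real.sqrt_nonneg b]

private lemma my_sqrt_le {a b : ℝ} (hb : 0 ≤ b) (ha : 0 ≤ a) (h : b ≤ a ^ 2) :
    Real.sqrt b ≤ a := by
  nlinarith [Real.sq_sqrt hb, Real.sqrt_nonneg b]

/-- For the skew product
`f(z,w) = (z² - 90, w² + z(0.046 + 0.04i) - 0.56 + 0.37i)` and every real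
`z ∈ [√80, 10]`, the fiber map `q_z(w) = w² + c(z)` with
`c(z) = z(0.046 + 0.04i) - 0.56 + 0.37i` has an attracting cycle of period 3:
there are pairwise distinct `w₀, w₁, w₂` in `ℂ` with `w₀² + c(z) = w₁`,
`w₁² + c(z) = w₂`, `w₂² + c(z) = w₀`, and `|8·w₀·w₁·w₂| < 1`. (Hence `q_z` lies in the
same hyperbolic component of the Mandelbrot set as the Rabbit `w ↦ w² - 0.12 + 0.75i`.)
The constants are exact rationals. -/
theorem stmt19 :
    ∀ z ∈ Set.Icc (Real.sqrt 80) (10 : ℝ),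
      ∃ w₀ w₁ w₂ : ℂ, w₀ ≠ w₁ ∧ w₁ ≠ w₂ ∧ w₀ ≠ w₂ ∧
        w₀ ^ 2 + ((z : ℂ) * (46 / 1000 + (4 / 100) * Complex.I)
          - 56 / 100 + (37 / 100) * Complex.I) = w₁ ∧
        w₁ ^ 2 + ((z : ℂ) * (46 / 1000 + (4 / 100) * Complex.I)
          - 56 / 100 + (37 / 100) * Complex.I) = w₂ ∧
        w₂ ^ 2 + ((z : ℂ) * (46 / 1000 + (4 / 100) * Complex.I)
          - 56 / 100 + (37 / 100) * Complex.I) = w₀ ∧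
        ‖8 * w₀ * w₁ * w₂‖ < 1 := by
  intro z hz
  obtain ⟨hzl, hzu⟩ := hz
  have hz1 : (8.9 : ℝ) ≤ z := le_trans (my_le_sqrt (by norm_num) (by norm_num)) hzl
  have ha : (0:ℝ) ≤ z - 8.9 := by linarith
  have hb : (0:ℝ) ≤ 10 - z := by linarith
  set c : ℂ := (z : ℂ) * (46 / 1000 + (4 / 100) * Complex.I)
          - 56 / 100 + (37 / 100) * Complex.I with hc
  have hcri : c = ((46/1000*z - 56/100 : ℝ) : ℂ) + ((4/100*z + 37/100 : ℝ) : ℂ) * Complex.I := by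
    rw [hc]; push_cast; ring
  have habsc : (0.74 : ℝ) ≤ ‖c‖ := by
    rw [hcri, Complex.norm_add_mul_I]
    apply my_le_sqrt (by norm_num)
    nlinarith [mul_nonneg ha hb, mul_nonneg ha ha]
  have habsc1 : (1.11 : ℝ) ≤ ‖c + 1‖ := by
    have h1 : c + 1 = ((46/1000*z + 44/100 : ℝ) : ℂ) + ((4/100*z + 37/100 : ℝ) : ℂ) * Complex.I := by
      rw [hcri]; push_cast; ring
    rw [h1, Complex.norm_add_mul_I]
    apply my_le_sqrt (by norm_num)
    nlinarith [mul_nonneg ha hb, mul_nonneg ha ha]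
  have habsS : (15.8 : ℝ) ≤ ‖8*c + 16‖ := by
    have h1 : 8*c + 16 = ((368/1000*z + 1152/100 : ℝ) : ℂ) + ((32/100*z + 296/100 : ℝ) : ℂ) * Complex.I := by
      rw [hcri]; push_cast; ring
    rw [h1, Complex.norm_add_mul_I]
    apply my_le_sqrt (by norm_num)
    nlinarith [mul_nonneg ha hb, mul_nonneg ha ha]
  have habsP : ‖64*(c^3 + 2*c^2 + c + 1)‖ ≤ 7 := by
    have hberA : (0:ℝ) ≤ (z-8.9)^3 := by positivity
    have hberB : (0:ℝ) ≤ (z-8.9)^2*(10-z) := by positivity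
    have hberC : (0:ℝ) ≤ (z-8.9)*(10-z)^2 := by positivity
    have hberD : (0:ℝ) ≤ (10-z)^3 := by positivity
    have hA1 : (847776/15625 - (210637/78125)*z - (97992/390625)*z^2 - (15433/1953125)*z^3 : ℝ) ≤ 4.9 := by
      nlinarith [hberA, hberB, hberC, hberD]
    have hA2 : (-5.8 : ℝ) ≤ (847776/15625 - (210637/78125)*z - (97992/390625)*z^2 - (15433/1953125)*z^3 : ℝ) := by
      nlinarith [hberA, hberB, hberC, hberD]
    have hB1 : (-161357/15625 - (87516/78125)*z + (43759/390625)*z^2 + (4748/390625)*z^3 : ℝ) ≤ 1.9 := by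
      nlinarith [hberA, hberB, hberC, hberD]
    have hB2 : (-2.9 : ℝ) ≤ (-161357/15625 - (87516/78125)*z + (43759/390625)*z^2 + (4748/390625)*z^3 : ℝ) := by
      nlinarith [hberA, hberB, hberC, hberD]
    have hPri : 64*(c^3 + 2*c^2 + c + 1) =
        ((847776/15625 - (210637/78125)*z - (97992/390625)*z^2 - (15433/1953125)*z^3 : ℝ) : ℂ)
        + ((-161357/15625 - (87516/78125)*z + (43759/390625)*z^2 + (4748/390625)*z^3 : ℝ) : ℂ) * Complex.I := by
      rw [hc]; push_cast
      linear_combination ((64/15625)*(z:ℂ)^3*Complex.I + (1104/78125)*(z:ℂ)^3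
        + (1776/15625)*(z:ℂ)^2*Complex.I + (22984/78125)*(z:ℂ)^2
        + (16428/15625)*(z:ℂ)*Complex.I + (141821/78125)*(z:ℂ)
        + (50653/15625)*Complex.I + (43808/15625)) * Complex.I_sq
    rw [hPri, Complex.norm_add_mul_I]
    apply my_sqrt_le (by positivity) (by norm_num)
    nlinarith [hA1, hA2, hB1, hB2]
  -- square root of the discriminant of γ² + γ + c + 2
  obtain ⟨s, hs⟩ := IsAlgClosed.exists_pow_nat_eq (-4*c - 7) (n := 2) (by norm_num)
  -- choose the γ (orbit sum) whose cycle has small multiplier 8(cγ+c+1)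
  obtain ⟨γ, hrel, hμ⟩ : ∃ γ : ℂ, γ^2 + γ + c + 2 = 0 ∧ ‖8*(c*γ + c + 1)‖ ≤ 0.54 := by
    have hrel1 : ((-1+s)/2)^2 + (-1+s)/2 + c + 2 = 0 := by linear_combination (1/4 : ℂ) * hs
    have hrel2 : ((-1-s)/2)^2 + (-1-s)/2 + c + 2 = 0 := by linear_combination (1/4 : ℂ) * hs
    have hmulP : (8*(c*((-1+s)/2) + c + 1)) * (8*(c*((-1-s)/2) + c + 1))
        = 64*(c^3 + 2*c^2 + c + 1) := by linear_combination (-16*c^2) * hs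
    have hsumS : (8*(c*((-1+s)/2) + c + 1)) + (8*(c*((-1-s)/2) + c + 1)) = 8*c + 16 := by ring
    set μ₁ := 8*(c*((-1+s)/2) + c + 1) with hμ1
    set μ₂ := 8*(c*((-1-s)/2) + c + 1) with hμ2
    have habs12 : ‖μ₁‖ * ‖μ₂‖ ≤ 7 := by
      rw [← norm_mul, hmulP]; exact habsP
    have htri : ‖8*c+16‖ ≤ ‖μ₁‖ + ‖μ₂‖ := by
      rw [← hsumS]; exact norm_add_le _ _
    rcases le_total (‖μ₁‖) (‖μ₂‖) with h | h
    · refine ⟨(-1+s)/2, hrel1, ?_⟩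
      have h1 : ‖μ₁‖ ≤ 2.7 := by
        nlinarith [norm_nonneg μ₁, norm_nonneg μ₂]
      have h2 : (13.1:ℝ) ≤ ‖μ₂‖ := by linarith
      nlinarith [norm_nonneg μ₁]
    · refine ⟨(-1-s)/2, hrel2, ?_⟩
      have h1 : ‖μ₂‖ ≤ 2.7 := by
        nlinarith [norm_nonneg μ₁, norm_nonneg μ₂]
      have h2 : (13.1:ℝ) ≤ ‖μ₁‖ := by linarith
      nlinarith [norm_nonneg μ₂]
  -- root of the cubic whose roots are the attracting 3-cycle
  obtain ⟨w0, hC⟩ : ∃ w : ℂ, w^3 - γ*w^2 + (c-1-γ)*w - (c*γ+c+1) = 0 := by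
    set p : Polynomial ℂ := Polynomial.X^3 - Polynomial.C γ * Polynomial.X^2
      + Polynomial.C (c-1-γ) * Polynomial.X - Polynomial.C (c*γ+c+1) with hp
    have hdeg : p.degree = 3 := by rw [hp]; compute_degree!
    obtain ⟨w, hw⟩ := IsAlgClosed.exists_root p (by rw [hdeg]; exact (by decide))
    refine ⟨w, ?_⟩
    have := hw
    simp only [hp, Polynomial.IsRoot.def, Polynomial.eval_add, Polynomial.eval_sub,
      Polynomial.eval_mul, Polynomial.eval_pow, Polynomial.eval_X, Polynomial.eval_C] at this
    linear_combination this
  -- the three cycle equations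
  have heq3 : ((w0^2 + c)^2 + c)^2 + c = w0 := by
    linear_combination ((w0^2 - w0 + c) * (w0^3 + (1+γ)*w0^2 + (c+γ)*w0 + c*γ - 1)) * hC
      + (c^3 + 3*c^2*w0^2 + c^2*w0 + 3*c*w0^4 + 2*c*w0^3 - c*w0^2 + w0^6 + w0^5 - w0^4 - w0^3) * hrel
  have hprod : 8*w0*(w0^2 + c)*((w0^2 + c)^2 + c) = 8*(c*γ + c + 1) := by
    linear_combination ((8)*c^2 + (16)*c*γ^2 + (16)*c*γ*w0 + (24)*c*γ + (16)*c*w0^2 + (8)*c*w0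
      + (16)*c + (8)*γ^4 + (8)*γ^3*w0 + (24)*γ^3 + (8)*γ^2*w0^2 + (16)*γ^2*w0 + (32)*γ^2
      + (8)*γ*w0^3 + (8)*γ*w0^2 + (16)*γ*w0 + (32)*γ + (8)*w0^4 + (8)*w0^2 + (8)*w0 + (8)) * hC
      + ((8)*c^2*γ + (8)*c^2 + (8)*c*γ^3 + (24)*c*γ^2 + (8)*c*γ*w0^2 + (8)*c*γ*w0 + (16)*c*γ
      + (8)*c*w0^2 + (8)*c*w0 + (8)*c + (8)*γ^3*w0^2 + (8)*γ^3*w0 + (24)*γ^2*w0^2 + (24)*γ^2*w0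
      + (8)*γ^2 + (16)*γ*w0^2 + (24)*γ*w0 + (16)*γ + (8)*w0^2 + (8)*w0) * hrel
  have habsprod : ‖8*w0*(w0^2 + c)*((w0^2 + c)^2 + c)‖ ≤ 0.54 := by
    rw [hprod]; exact hμ
  -- distinctness
  have hne01 : w0 ≠ w0^2 + c := by
    intro h
    have h1 : w0^2 + c = w0 := h.symm
    have h8 : ‖8*w0*w0*w0‖ ≤ 0.54 := by
      have e : 8*w0*(w0^2 + c)*((w0^2 + c)^2 + c) = 8*w0*w0*w0 := by
        linear_combination ((8)*c^2*w0 + (16)*c*w0^3 + (8)*c*w0^2 + (8)*c*w0 + (8)*w0^5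
          + (8)*w0^4 + (8)*w0^3 + (8)*w0^2) * h1
      rw [← e]; exact habsprod
    rw [norm_mul, norm_mul, norm_mul, Complex.norm_ofNat] at h8
    have hw0b : ‖w0‖ ≤ 0.41 := by
      nlinarith [norm_nonneg w0, sq_nonneg (‖w0‖ - 0.41)]
    have hcval : ‖c‖ ≤ 0.58 := by
      have hcw : c = w0 - w0^2 := by linear_combination -h
      rw [hcw]
      have hpow : ‖w0^2‖ = ‖w0‖ ^ 2 := norm_pow w0 2
      have htr : ‖w0 - w0^2‖ ≤ ‖w0‖ + ‖w0‖ ^ 2 := by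
        calc ‖w0 - w0^2‖ = ‖w0 + -(w0^2)‖ := by rw [sub_eq_add_neg]
          _ ≤ ‖w0‖ + ‖-(w0^2)‖ := norm_add_le _ _
          _ = ‖w0‖ + ‖w0‖ ^ 2 := by rw [norm_neg, hpow]
      nlinarith [norm_nonneg w0]
    linarith
  have hne12 : w0^2 + c ≠ (w0^2 + c)^2 + c := by
    intro h
    have h2 : ((w0^2 + c)^2 + c)^2 + c = w0 := heq3
    rw [← h] at h2
    rw [← h] at h2
    exact hne01 h2.symm
  have hne02 : w0 ≠ (w0^2 + c)^2 + c := by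
    intro h
    have hfac : (w0 - (w0^2 + c)) * (w0 + (w0^2 + c) + 1) = 0 := by linear_combination h
    have hsub : w0 - (w0^2 + c) ≠ 0 := sub_ne_zero.mpr hne01
    have hlin : w0 + (w0^2 + c) + 1 = 0 := by
      rcases mul_eq_zero.mp hfac with h' | h'
      · exact absurd h' hsub
      · exact h'
    have hc1 : w0 * (w0^2 + c) = c + 1 := by linear_combination (w0 - 1) * hlin
    have habs_uv : ‖w0‖ * ‖w0^2 + c‖ = ‖c + 1‖ := by
      rw [← norm_mul, hc1]
    have hμ2 : ‖8*w0*(w0^2 + c)*w0‖ ≤ 0.54 := by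
      have e : 8*w0*(w0^2 + c)*w0 = 8*w0*(w0^2 + c)*((w0^2 + c)^2 + c) := by
        rw [← h]
      rw [e]; exact habsprod
    rw [norm_mul, norm_mul, norm_mul, Complex.norm_ofNat] at hμ2
    have hub : ‖w0‖ ≤ 0.061 := by
      nlinarith [norm_nonneg w0, norm_nonneg (w0^2 + c), habs_uv, habsc1]
    have hveq : w0^2 + c = -1 - w0 := by linear_combination hlin
    have hv : ‖w0^2 + c‖ ≤ 1 + ‖w0‖ := by
      rw [hveq, show (-1 - w0 : ℂ) = -(1 + w0) by ring, norm_neg]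
      calc ‖1 + w0‖ ≤ ‖1‖ + ‖w0‖ := norm_add_le _ _
        _ = 1 + ‖w0‖ := by rw [norm_one]
    nlinarith [norm_nonneg w0, norm_nonneg (w0^2 + c), habs_uv, habsc1, hub, hv]
  refine ⟨w0, w0^2 + c, (w0^2 + c)^2 + c, hne01, hne12, hne02, rfl, rfl, heq3, ?_⟩
  rw [hprod]
  have : ‖8*(c*γ + c + 1)‖ ≤ 0.54 := hμ
  calc ‖8*(c*γ + c + 1)‖ ≤ 0.54 := hμ
    _ < 1 := by norm_num
end
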